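/- Let Δ_t be defined on the generators of the restricted quantum group U_q sl(2) (q = e^{iπ/p}, t an odd integer) by Δ_t(E) = E⊗K + (e_0 + q^t e_1)⊗E, Δ_t(F) = F⊗1 + (e_0 + q^{-t}e_1)K^{-1}⊗F, Δ_t(K) = K⊗K, where e_0 = (1+K^p)/2, e_1 = (1−K^p)/2. Then Δ_t extends to an algebra homomorphism U_q sl(2) → U_q sl(2) ⊗ U_q sl(2), i.e. it is compatible with all defining relations including E^p = F^p = 0 and K^{2p} = 1. -/

import Mathlib

noncomputable section

open Complex
open scoped TensorProduct

/-- The idempotent `e₀ = (1 + K^p)/2`. -/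
def idem0 (p : ℕ) {A : Type*} [Ring A] [Algebra ℂ A] (K : A) : A :=
  (2 : ℂ)⁻¹ • (1 + K ^ p)

/-- The idempotent `e₁ = 1 − e₀`. -/
def idem1 (p : ℕ) {A : Type*} [Ring A] [Algebra ℂ A] (K : A) : A :=
  1 - idem0 p K


namespace CoprodAux

def qc (ζ : ℂ) : ℕ → ℕ → ℂ
  | 0, 0 => 1
  | 0, _+1 => 0
  | _+1, 0 => 1
  | n+1, k+1 => qc ζ n k + ζ^(k+1) * qc ζ n (k+1)

lemma qc_zero (ζ : ℂ) (n : ℕ) : qc ζ n 0 = 1 := by cases n <;> rfl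

lemma qc_succ (ζ : ℂ) (n k : ℕ) :
    qc ζ (n+1) (k+1) = qc ζ n k + ζ^(k+1) * qc ζ n (k+1) := rfl

lemma qc_of_lt (ζ : ℂ) : ∀ n k, n < k → qc ζ n k = 0
  | 0, _+1, _ => rfl
  | n+1, k+1, h => by
      rw [qc_succ, qc_of_lt ζ n k (by omega), qc_of_lt ζ n (k+1) (by omega)]; ring

lemma qc_diag (ζ : ℂ) : ∀ n, qc ζ n n = 1
  | 0 => rfl
  | n+1 => by rw [qc_succ, qc_diag ζ n, qc_of_lt ζ n (n+1) (by omega)]; ring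

lemma qc_pascalB (ζ : ℂ) : ∀ n k, qc ζ (n+1) (k+1) = ζ^(n-k) * qc ζ n k + qc ζ n (k+1) := by
  intro n
  induction n with
  | zero =>
    intro k
    match k with
    | 0 => simp [qc_succ, qc]
    | j+1 => simp [qc_succ, qc_of_lt ζ 0 (j+1) (by omega), qc_of_lt ζ 0 (j+2) (by omega),
        qc_of_lt ζ 1 (j+2) (by omega)]
  | succ n ih =>
    intro k
    match k with
    | 0 =>
      simp only [Nat.sub_zero]
      have B := ih 0
      simp only [Nat.sub_zero] at B
      linear_combination (qc_succ ζ (n+1) 0) + ζ * B - (qc_succ ζ n 0)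
        - (1 - ζ^(n+1)) * (qc_zero ζ n) + (1 - ζ^(n+1)) * (qc_zero ζ (n+1))
    | j+1 =>
      rcases le_or_gt (j+1) n with hle | hgt
      · have B2 := ih j
        have B3 := ih (j+1)
        have e2 : n - j = (n - (j+1)) + 1 := by omega
        rw [e2] at B2
        have e1 : n + 1 - (j + 1) = (n - (j+1)) + 1 := by omega
        rw [e1]
        linear_combination (qc_succ ζ (n+1) (j+1)) + B2
          - (ζ^((n-(j+1))+1)) * (qc_succ ζ n j) + (ζ^(j+2)) * B3 - (qc_succ ζ n (j+1))
      · rcases eq_or_lt_of_le (Nat.succ_le_of_lt hgt) with he | hlt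
        · -- j = n
          have hj : j = n := by omega
          subst hj
          rw [qc_succ, qc_of_lt ζ (j+1) (j+2) (by omega)]
          simp
        · -- n < j
          rw [qc_of_lt ζ (n+2) (j+2) (by omega), qc_of_lt ζ (n+1) (j+1) (by omega),
            qc_of_lt ζ (n+1) (j+2) (by omega)]
          ring

lemma qc_cross (ζ : ℂ) (n k : ℕ) :
    (1 - ζ^(k+1)) * qc ζ n (k+1) = (1 - ζ^(n-k)) * qc ζ n k := by
  linear_combination (qc_succ ζ n k) - (qc_pascalB ζ n k)

lemma qc_prim_eq_zero {ζ : ℂ} {p : ℕ} (hζp : ζ ^ p = 1)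
    (hζ : ∀ k, 0 < k → k < p → ζ ^ k ≠ 1) :
    ∀ k, 0 < k → k < p → qc ζ p k = 0 := by
  intro k
  induction k with
  | zero => omega
  | succ j ihj =>
    intro _ hlt
    have hne : (1 : ℂ) - ζ^(j+1) ≠ 0 := by
      intro h
      exact hζ (j+1) (by omega) hlt (by linear_combination -h)
    rcases Nat.eq_zero_or_pos j with rfl | hj
    · have hc := qc_cross ζ p 0
      rw [Nat.sub_zero, hζp, sub_self, zero_mul] at hc
      exact (mul_eq_zero.mp hc).resolve_left hne
    · have hc := qc_cross ζ p j
      rw [ihj hj (by omega), mul_zero] at hc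
      exact (mul_eq_zero.mp hc).resolve_left hne

lemma smul_pow_comm {R : Type*} [Ring R] {ζ : ℂ} [Algebra ℂ R] {a b : R}
    (h : b * a = ζ • (a * b)) : ∀ k : ℕ, b * a ^ k = ζ ^ k • (a ^ k * b)
  | 0 => by simp
  | k+1 => by
    rw [pow_succ, ← mul_assoc, smul_pow_comm h k, smul_mul_assoc, mul_assoc, h,
      mul_smul_comm, smul_smul, ← mul_assoc, ← pow_succ, ← pow_succ]

lemma qbinom {R : Type*} [Ring R] [Algebra ℂ R] {ζ : ℂ} {a b : R}
    (h : b * a = ζ • (a * b)) (n : ℕ) :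
    (a + b) ^ n = ∑ k ∈ Finset.range (n+1), qc ζ n k • (a ^ k * b ^ (n - k)) := by
  induction n with
  | zero => simp [qc_zero]
  | succ n ih =>
    rw [pow_succ', ih, Finset.mul_sum]
    have step : ∀ k, (a + b) * (qc ζ n k • (a ^ k * b ^ (n - k)))
        = qc ζ n k • (a ^ (k+1) * b ^ (n - k))
          + (ζ ^ k * qc ζ n k) • (a ^ k * b ^ ((n - k) + 1)) := by
      intro k
      rw [add_mul, mul_smul_comm, mul_smul_comm]
      rw [← mul_assoc a, ← pow_succ']
      rw [← mul_assoc b, smul_pow_comm h k, smul_mul_assoc, mul_assoc (a^k), ← pow_succ']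
      rw [smul_smul, mul_comm (qc ζ n k) (ζ^k)]
    simp_rw [step]
    rw [Finset.sum_add_distrib]
    rw [Finset.sum_range_succ' (fun k => qc ζ (n+1) k • (a ^ k * b ^ (n + 1 - k))) (n+1)]
    have e0 : qc ζ (n+1) 0 • (a ^ 0 * b ^ (n+1-0)) = b ^ (n+1) := by
      simp [qc_zero]
    rw [e0]
    have esplit : ∀ k, qc ζ (n+1) (k+1) • (a ^ (k+1) * b ^ (n + 1 - (k+1)))
        = qc ζ n k • (a ^ (k+1) * b ^ (n - k))
          + (ζ^(k+1) * qc ζ n (k+1)) • (a ^ (k+1) * b ^ (n - k)) := by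
      intro k
      rw [qc_succ, add_smul, Nat.succ_sub_succ]
    simp_rw [esplit]
    rw [Finset.sum_add_distrib, add_assoc]
    congr 1
    have key : ∀ k ∈ Finset.range (n+1),
        (ζ ^ k * qc ζ n k) • (a ^ k * b ^ ((n - k) + 1))
        = (ζ ^ k * qc ζ n k) • (a ^ k * b ^ (n + 1 - k)) := by
      intro k hk
      have : n - k + 1 = n + 1 - k := by
        have := Finset.mem_range.mp hk; omega
      rw [this]
    rw [Finset.sum_congr rfl key]
    rw [Finset.sum_range_succ' (fun k => (ζ ^ k * qc ζ n k) • (a ^ k * b ^ (n + 1 - k))) n]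
    have last : ∀ k ∈ Finset.range n, (ζ ^ (k+1) * qc ζ n (k+1)) • (a ^ (k+1) * b ^ (n + 1 - (k+1)))
        = (ζ ^ (k+1) * qc ζ n (k+1)) • (a ^ (k+1) * b ^ (n - k)) := by
      intro k hk; rw [Nat.succ_sub_succ]
    rw [Finset.sum_congr rfl last]
    have ext : ∑ k ∈ Finset.range (n+1), (ζ^(k+1) * qc ζ n (k+1)) • (a ^ (k+1) * b ^ (n - k))
        = ∑ k ∈ Finset.range n, (ζ^(k+1) * qc ζ n (k+1)) • (a ^ (k+1) * b ^ (n - k)) := by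
      rw [Finset.sum_range_succ, qc_of_lt ζ n (n+1) (by omega)]
      simp
    rw [ext]
    simp [qc_zero]

lemma add_pow_eq_zero {R : Type*} [Ring R] [Algebra ℂ R] {ζ : ℂ} {a b : R} {p : ℕ}
    (h : b * a = ζ • (a * b)) (hζp : ζ ^ p = 1)
    (hζ : ∀ k, 0 < k → k < p → ζ ^ k ≠ 1)
    (ha : a ^ p = 0) (hb : b ^ p = 0) : (a + b) ^ p = 0 := by
  rw [qbinom h p]
  apply Finset.sum_eq_zero
  intro k hk
  have hk' : k ≤ p := by have := Finset.mem_range.mp hk; omega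
  rcases Nat.eq_zero_or_pos k with rfl | hk0
  · simp [hb]
  rcases eq_or_lt_of_le hk' with rfl | hlt
  · simp [ha]
  · rw [qc_prim_eq_zero hζp hζ k hk0 hlt, zero_smul]

end CoprodAux


open CoprodAux in
theorem coproduct_compatible_with_relations
    (p : ℕ) (hp : 2 ≤ p) (t : ℤ) (ht : Odd t)
    (A : Type*) [Ring A] [Algebra ℂ A]
    (E F K Kinv : A)
    (q : ℂ) (hq : q = Complex.exp (Real.pi * Complex.I / p))
    (hKinv : K * Kinv = 1) (hKinv' : Kinv * K = 1)
    (hKE : K * E = (q ^ 2) • (E * K))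
    (hKF : K * F = ((q ^ 2)⁻¹) • (F * K))
    (hEF : E * F - F * E = ((q - q⁻¹)⁻¹) • (K - Kinv))
    (hEp : E ^ p = 0) (hFp : F ^ p = 0) (hK2p : K ^ (2 * p) = 1) :
    let ΔE : A ⊗[ℂ] A := E ⊗ₜ[ℂ] K + (idem0 p K + q ^ t • idem1 p K) ⊗ₜ[ℂ] E
    let ΔF : A ⊗[ℂ] A := F ⊗ₜ[ℂ] 1 + ((idem0 p K + q ^ (-t) • idem1 p K) * Kinv) ⊗ₜ[ℂ] F
    let ΔK : A ⊗[ℂ] A := K ⊗ₜ[ℂ] K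
    let ΔKinv : A ⊗[ℂ] A := Kinv ⊗ₜ[ℂ] Kinv
    ΔK * ΔKinv = 1 ∧ ΔKinv * ΔK = 1 ∧
    ΔK * ΔE = (q ^ 2) • (ΔE * ΔK) ∧
    ΔK * ΔF = ((q ^ 2)⁻¹) • (ΔF * ΔK) ∧
    ΔE * ΔF - ΔF * ΔE = ((q - q⁻¹)⁻¹) • (ΔK - ΔKinv) ∧
    ΔE ^ p = 0 ∧ ΔF ^ p = 0 ∧ ΔK ^ (2 * p) = 1 := by
  intro ΔE ΔF ΔK ΔKinv
  -- scalar facts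
  have hpC : (p : ℂ) ≠ 0 := Nat.cast_ne_zero.mpr (by omega)
  have hq0 : q ≠ 0 := by rw [hq]; exact Complex.exp_ne_zero _
  have hq2 : q ^ 2 ≠ 0 := pow_ne_zero _ hq0
  have hqp : q ^ p = -1 := by
    rw [hq, ← Complex.exp_nat_mul]
    rw [show (p : ℂ) * (Real.pi * Complex.I / p) = Real.pi * Complex.I by
      field_simp]
    exact Complex.exp_pi_mul_I
  have hq2p : (q ^ 2) ^ p = 1 := by
    rw [← pow_mul, mul_comm, pow_mul, hqp]; norm_num
  have hprim : ∀ k : ℕ, 0 < k → k < p → (q ^ 2) ^ k ≠ 1 := by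
    intro k hk0 hkp hone
    have h2k : Complex.exp ((↑(2 * k) : ℂ) * (Real.pi * Complex.I / p)) = 1 := by
      rw [Complex.exp_nat_mul, ← hq, pow_mul]; exact hone
    rw [Complex.exp_eq_one_iff] at h2k
    obtain ⟨n, hn⟩ := h2k
    have hπ : (Real.pi : ℂ) ≠ 0 := Complex.ofReal_ne_zero.mpr Real.pi_ne_zero
    have h2πI : (2 : ℂ) * (Real.pi : ℂ) * Complex.I ≠ 0 :=
      mul_ne_zero (mul_ne_zero two_ne_zero hπ) Complex.I_ne_zero
    have hk' : (k : ℂ) = (n : ℂ) * (p : ℂ) := by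
      apply mul_left_cancel₀ h2πI
      field_simp at hn
      push_cast at hn ⊢
      linear_combination ((Real.pi : ℂ) * Complex.I) * hn
    have hdvd : (p : ℤ) ∣ (k : ℤ) :=
      ⟨n, by exact_mod_cast hk'.trans (mul_comm (n : ℂ) (p : ℂ))⟩
    have := Int.le_of_dvd (by exact_mod_cast hk0) hdvd
    omega
  have hq2p' : ((q ^ 2)⁻¹) ^ p = 1 := by rw [inv_pow, hq2p, inv_one]
  have hprim' : ∀ k : ℕ, 0 < k → k < p → ((q ^ 2)⁻¹) ^ k ≠ 1 := by
    intro k hk0 hkp hone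
    rw [inv_pow, inv_eq_one] at hone
    exact hprim k hk0 hkp hone
  have hqtt : q ^ t * q ^ (-t) = 1 := by
    rw [← zpow_add₀ hq0, add_neg_cancel, zpow_zero]
  have hqtt' : q ^ (-t) * q ^ t = 1 := by
    rw [← zpow_add₀ hq0, neg_add_cancel, zpow_zero]
  -- commutation in A
  have hKmE : ∀ m : ℕ, K ^ m * E = ((q ^ 2) ^ m) • (E * K ^ m) := by
    intro m
    induction m with
    | zero => simp
    | succ m ih =>
      rw [pow_succ, mul_assoc, hKE, mul_smul_comm, ← mul_assoc, ih,
        smul_mul_assoc, smul_smul, mul_assoc, ← pow_succ, ← pow_succ']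
  have hKmF : ∀ m : ℕ, K ^ m * F = (((q ^ 2)⁻¹) ^ m) • (F * K ^ m) := by
    intro m
    induction m with
    | zero => simp
    | succ m ih =>
      rw [pow_succ, mul_assoc, hKF, mul_smul_comm, ← mul_assoc, ih,
        smul_mul_assoc, smul_smul, mul_assoc, ← pow_succ, ← pow_succ']
  have hKpE : K ^ p * E = E * K ^ p := by rw [hKmE p, hq2p, one_smul]
  have hKpF : K ^ p * F = F * K ^ p := by rw [hKmF p, hq2p', one_smul]
  have hKpK : K ^ p * K = K * K ^ p := by rw [← pow_succ, ← pow_succ']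
  have hcKinvK : Commute Kinv K := by
    unfold Commute SemiconjBy; rw [hKinv, hKinv']
  have hKpKinv : K ^ p * Kinv = Kinv * K ^ p := ((hcKinvK.pow_right p).eq).symm
  have hKinvE : E * Kinv = (q ^ 2) • (Kinv * E) := by
    calc E * Kinv = Kinv * K * E * Kinv := by rw [hKinv', one_mul]
      _ = Kinv * (K * E) * Kinv := by rw [mul_assoc Kinv K E]
      _ = Kinv * ((q ^ 2) • (E * K)) * Kinv := by rw [hKE]
      _ = (q ^ 2) • (Kinv * E * (K * Kinv)) := by
          simp only [mul_smul_comm, smul_mul_assoc, mul_assoc]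
      _ = (q ^ 2) • (Kinv * E) := by rw [hKinv, mul_one]
  have hKinvF : F * Kinv = ((q ^ 2)⁻¹) • (Kinv * F) := by
    calc F * Kinv = Kinv * K * F * Kinv := by rw [hKinv', one_mul]
      _ = Kinv * (K * F) * Kinv := by rw [mul_assoc Kinv K F]
      _ = Kinv * (((q ^ 2)⁻¹) • (F * K)) * Kinv := by rw [hKF]
      _ = ((q ^ 2)⁻¹) • (Kinv * F * (K * Kinv)) := by
          simp only [mul_smul_comm, smul_mul_assoc, mul_assoc]
      _ = ((q ^ 2)⁻¹) • (Kinv * F) := by rw [hKinv, mul_one]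
  -- idempotents
  have hKpKp : K ^ p * K ^ p = 1 := by rw [← pow_add, ← two_mul, hK2p]
  have hxx : (1 + K ^ p) * (1 + K ^ p) = (2 : ℂ) • (1 + K ^ p) := by
    have hstep : (1 + K ^ p) * (1 + K ^ p) = 1 + K ^ p + K ^ p + K ^ p * K ^ p := by
      noncomm_ring
    rw [hstep, hKpKp, two_smul]
    abel
  have he00 : idem0 p K * idem0 p K = idem0 p K := by
    unfold idem0
    rw [smul_mul_assoc, mul_smul_comm, hxx, smul_smul, smul_smul]
    norm_num
  have he01 : idem0 p K * idem1 p K = 0 := by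
    unfold idem1; rw [mul_sub, mul_one, he00, sub_self]
  have he10 : idem1 p K * idem0 p K = 0 := by
    unfold idem1; rw [sub_mul, one_mul, he00, sub_self]
  have he11 : idem1 p K * idem1 p K = idem1 p K := by
    unfold idem1
    rw [mul_sub, mul_one, sub_mul, one_mul, he00]
    abel
  have hsum : idem0 p K + idem1 p K = 1 := by
    unfold idem1; abel
  have hcomm0 : ∀ x : A, K ^ p * x = x * K ^ p → idem0 p K * x = x * idem0 p K := by
    intro x hx
    unfold idem0
    rw [smul_mul_assoc, mul_smul_comm, add_mul, one_mul, mul_add, mul_one, hx]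
  have hcomm1 : ∀ x : A, K ^ p * x = x * K ^ p → idem1 p K * x = x * idem1 p K := by
    intro x hx
    unfold idem1
    rw [sub_mul, one_mul, mul_sub, mul_one, hcomm0 x hx]
  have hgcomm : ∀ (s : ℂ) (x : A), K ^ p * x = x * K ^ p →
      (idem0 p K + s • idem1 p K) * x = x * (idem0 p K + s • idem1 p K) := by
    intro s x hx
    rw [add_mul, mul_add, hcomm0 x hx, smul_mul_assoc, mul_smul_comm, hcomm1 x hx]
  have hmix : ∀ s s' : ℂ, (idem0 p K + s • idem1 p K) * (idem0 p K + s' • idem1 p K)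
      = idem0 p K + (s * s') • idem1 p K := by
    intro s s'
    simp only [mul_add, add_mul, smul_mul_assoc, mul_smul_comm, he00, he01, he10, he11,
      smul_zero, add_zero, zero_add, smul_smul]
    rw [mul_comm s s']
  -- named elements
  set g : A := idem0 p K + q ^ t • idem1 p K with hg_def
  set c : A := idem0 p K + q ^ (-t) • idem1 p K with hc_def
  have hgE : g * E = E * g := hgcomm _ E hKpE
  have hcE : c * E = E * c := hgcomm _ E hKpE
  have hgF : g * F = F * g := hgcomm _ F hKpF
  have hcF : c * F = F * c := hgcomm _ F hKpF
  have hgK : K * g = g * K := (hgcomm _ K hKpK).symm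
  have hcK : K * c = c * K := (hgcomm _ K hKpK).symm
  have hgKinv : Kinv * g = g * Kinv := (hgcomm _ Kinv hKpKinv).symm
  have hgc : g * c = 1 := by rw [hg_def, hc_def, hmix, hqtt, one_smul, hsum]
  have hcg : c * g = 1 := by rw [hg_def, hc_def, hmix, hqtt', one_smul, hsum]
  have hgh : g * (c * Kinv) = Kinv := by rw [← mul_assoc, hgc, one_mul]
  have hhg : (c * Kinv) * g = Kinv := by
    rw [mul_assoc, hgKinv, ← mul_assoc, hcg, one_mul]
  have hEh : E * (c * Kinv) = (q ^ 2) • ((c * Kinv) * E) := by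
    rw [← mul_assoc, ← hcE, mul_assoc, hKinvE, mul_smul_comm, mul_assoc]
  have hFh : F * (c * Kinv) = ((q ^ 2)⁻¹) • ((c * Kinv) * F) := by
    rw [← mul_assoc, ← hcF, mul_assoc, hKinvF, mul_smul_comm, mul_assoc]
  have hKh : K * (c * Kinv) = (c * Kinv) * K := by
    rw [← mul_assoc, hcK, mul_assoc, hKinv, mul_one, mul_assoc, hKinv', mul_one]
  -- tensor computations
  refine ⟨?_, ?_, ?_, ?_, ?_, ?_, ?_, ?_⟩
  · show (K ⊗ₜ[ℂ] K) * (Kinv ⊗ₜ[ℂ] Kinv) = 1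
    rw [Algebra.TensorProduct.tmul_mul_tmul, hKinv, Algebra.TensorProduct.one_def]
  · show (Kinv ⊗ₜ[ℂ] Kinv) * (K ⊗ₜ[ℂ] K) = 1
    rw [Algebra.TensorProduct.tmul_mul_tmul, hKinv', Algebra.TensorProduct.one_def]
  · show (K ⊗ₜ[ℂ] K) * (E ⊗ₜ[ℂ] K + g ⊗ₜ[ℂ] E)
      = (q ^ 2) • ((E ⊗ₜ[ℂ] K + g ⊗ₜ[ℂ] E) * (K ⊗ₜ[ℂ] K))
    simp only [mul_add, add_mul, Algebra.TensorProduct.tmul_mul_tmul, hKE, hgK,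
      TensorProduct.smul_tmul', TensorProduct.tmul_smul, smul_add]
  · show (K ⊗ₜ[ℂ] K) * (F ⊗ₜ[ℂ] 1 + (c * Kinv) ⊗ₜ[ℂ] F)
      = ((q ^ 2)⁻¹) • ((F ⊗ₜ[ℂ] 1 + (c * Kinv) ⊗ₜ[ℂ] F) * (K ⊗ₜ[ℂ] K))
    simp only [mul_add, add_mul, Algebra.TensorProduct.tmul_mul_tmul, hKF, hKh,
      TensorProduct.smul_tmul', TensorProduct.tmul_smul, smul_add, mul_one, one_mul]
  · show (E ⊗ₜ[ℂ] K + g ⊗ₜ[ℂ] E) * (F ⊗ₜ[ℂ] 1 + (c * Kinv) ⊗ₜ[ℂ] F)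
      - (F ⊗ₜ[ℂ] 1 + (c * Kinv) ⊗ₜ[ℂ] F) * (E ⊗ₜ[ℂ] K + g ⊗ₜ[ℂ] E)
      = ((q - q⁻¹)⁻¹) • (K ⊗ₜ[ℂ] K - Kinv ⊗ₜ[ℂ] Kinv)
    have hEx1 : (E ⊗ₜ[ℂ] K + g ⊗ₜ[ℂ] E) * (F ⊗ₜ[ℂ] 1 + (c * Kinv) ⊗ₜ[ℂ] F)
        = (E * F) ⊗ₜ[ℂ] K + ((c * Kinv) * E) ⊗ₜ[ℂ] (F * K)
          + (F * g) ⊗ₜ[ℂ] E + Kinv ⊗ₜ[ℂ] (E * F) := by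
      simp only [mul_add, add_mul, Algebra.TensorProduct.tmul_mul_tmul, mul_one, one_mul,
        hEh, hKF, hgF, hgh, TensorProduct.smul_tmul', TensorProduct.tmul_smul, smul_smul,
        mul_inv_cancel₀ hq2, inv_mul_cancel₀ hq2, one_smul]
      abel
    have hEx2 : (F ⊗ₜ[ℂ] 1 + (c * Kinv) ⊗ₜ[ℂ] F) * (E ⊗ₜ[ℂ] K + g ⊗ₜ[ℂ] E)
        = (F * E) ⊗ₜ[ℂ] K + (F * g) ⊗ₜ[ℂ] E
          + ((c * Kinv) * E) ⊗ₜ[ℂ] (F * K) + Kinv ⊗ₜ[ℂ] (F * E) := by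
      simp only [mul_add, add_mul, Algebra.TensorProduct.tmul_mul_tmul, mul_one, one_mul, hhg]
      abel
    rw [hEx1, hEx2]
    have key : (E * F - F * E) ⊗ₜ[ℂ] K + Kinv ⊗ₜ[ℂ] (E * F - F * E)
        = ((q - q⁻¹)⁻¹) • (K ⊗ₜ[ℂ] K - Kinv ⊗ₜ[ℂ] Kinv) := by
      rw [hEF, ← TensorProduct.smul_tmul', TensorProduct.tmul_smul, ← smul_add]
      congr 1
      rw [TensorProduct.sub_tmul, TensorProduct.tmul_sub]
      abel
    rw [← key, TensorProduct.sub_tmul, TensorProduct.tmul_sub]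
    abel
  · show (E ⊗ₜ[ℂ] K + g ⊗ₜ[ℂ] E) ^ p = 0
    refine add_pow_eq_zero (ζ := (q ^ 2)⁻¹) ?_ hq2p' hprim' ?_ ?_
    · rw [Algebra.TensorProduct.tmul_mul_tmul, Algebra.TensorProduct.tmul_mul_tmul,
        hKE, hgE, TensorProduct.tmul_smul, smul_smul, inv_mul_cancel₀ hq2, one_smul]
    · rw [Algebra.TensorProduct.tmul_pow, hEp, TensorProduct.zero_tmul]
    · rw [Algebra.TensorProduct.tmul_pow, hEp, TensorProduct.tmul_zero]
  · show (F ⊗ₜ[ℂ] 1 + (c * Kinv) ⊗ₜ[ℂ] F) ^ p = 0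
    refine add_pow_eq_zero (ζ := q ^ 2) ?_ hq2p hprim ?_ ?_
    · rw [Algebra.TensorProduct.tmul_mul_tmul, Algebra.TensorProduct.tmul_mul_tmul,
        mul_one, one_mul, hFh, TensorProduct.smul_tmul', smul_smul,
        mul_inv_cancel₀ hq2, one_smul]
    · rw [Algebra.TensorProduct.tmul_pow, hFp, TensorProduct.zero_tmul]
    · rw [Algebra.TensorProduct.tmul_pow, hFp, TensorProduct.tmul_zero]
  · show (K ⊗ₜ[ℂ] K) ^ (2 * p) = 1
    rw [Algebra.TensorProduct.tmul_pow, hK2p, Algebra.TensorProduct.one_def]
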